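/- There exist 3-by-3 real symmetric positive definite matrices A and B such that the matrix ABA^2B^2 has an eigenvalue that is not positive. -/

import Mathlib

open Matrix Polynomial

lemma aux_root_mem_spectrum {n : Type*} [Fintype n] [DecidableEq n]
    (N : Matrix n n ℂ) {μ : ℂ} (h : N.charpoly.IsRoot μ) : μ ∈ spectrum ℂ N := by
  rw [spectrum.mem_iff]
  have key : N.charpoly.eval μ = (algebraMap ℂ (Matrix n n ℂ) μ - N).det := by
    have h1 : N.charpoly.eval μ = ((evalRingHom μ).mapMatrix N.charmatrix).det := by
      rw [Matrix.charpoly, ← RingHom.map_det]; rfl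
    rw [h1]
    congr 1
    ext i j
    by_cases hij : i = j <;>
      simp [hij, Matrix.charmatrix_apply, Matrix.diagonal_apply,
        Matrix.algebraMap_matrix_apply, Matrix.map_apply]
  intro hu
  rw [Matrix.isUnit_iff_isUnit_det, isUnit_iff_ne_zero] at hu
  exact hu (key ▸ h)

lemma aux_posDef {n : Type*} [Fintype n] [DecidableEq n] {D : Matrix n n ℝ}
    (hD : IsUnit D.det) : (Dᴴ * D).PosDef := by
  have hs := Matrix.posSemidef_conjTranspose_mul_self D
  refine ⟨hs.1, fun x hx => ?_⟩
  rcases (hs.2 x).eq_or_lt with h | h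
  · exfalso
    have h0 : (Dᴴ * D) *ᵥ x = 0 := (hs.dotProduct_mulVec_zero_iff x).mp (by
      rw [Finsupp.sum_fintype _ _ (by simp)] at h
      simp only [dotProduct, mulVec, Finset.mul_sum, star_trivial]
      rw [h]; refine Finset.sum_congr rfl fun i _ => ?_
      rw [Finsupp.sum_fintype _ _ (by simp)]; refine Finset.sum_congr rfl fun j _ => ?_
      simp [star_trivial]; ring)
    have hu : IsUnit (Dᴴ * D) := by
      rw [Matrix.isUnit_iff_isUnit_det, Matrix.det_mul, Matrix.det_conjTranspose]
      simpa using hD.mul hD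
    have hinj := Matrix.mulVec_injective_iff_isUnit.mpr hu
    exact hx (Finsupp.coe_eq_zero.mp (hinj (show (Dᴴ * D) *ᵥ ⇑x = (Dᴴ * D) *ᵥ (0 : n → ℝ) by
      rw [h0, Matrix.mulVec_zero])))
  · exact h

theorem exists_posDef_word_nonpositive_eigenvalue :
    ∃ A B : Matrix (Fin 3) (Fin 3) ℝ, A.PosDef ∧ B.PosDef ∧
      ∃ μ ∈ spectrum ℂ ((A * B * A ^ 2 * B ^ 2).map (algebraMap ℝ ℂ)),
        ¬(μ.im = 0 ∧ 0 < μ.re) := by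
  refine ⟨!![(196:ℝ),0,0;0,105625,0;0,0,4410000],
         !![(407466:ℝ),61227,-3334;61227,26478,1251;-3334,1251,205], ?_, ?_, ?_⟩
  · have hC : IsUnit (!![(14:ℝ),0,0;0,325,0;0,0,2100]).det := by
      rw [Matrix.det_fin_three, isUnit_iff_ne_zero]; simp
    have hCt : (!![(14:ℝ),0,0;0,325,0;0,0,2100])ᴴ = !![(14:ℝ),0,0;0,325,0;0,0,2100] := by
      ext i j
      fin_cases i <;> fin_cases j <;> simp [Matrix.conjTranspose_apply, Matrix.vecHead, Matrix.vecTail]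
    have he : (!![(14:ℝ),0,0;0,325,0;0,0,2100])ᴴ * !![(14:ℝ),0,0;0,325,0;0,0,2100]
        = !![(196:ℝ),0,0;0,105625,0;0,0,4410000] := by
      rw [hCt]; norm_num [Matrix.mul_fin_three]
    exact he ▸ aux_posDef hC
  · have hD : IsUnit (!![(436:ℝ),-27,-13;257,57,0;-389,-150,-6]).det := by
      rw [Matrix.det_fin_three, isUnit_iff_ne_zero]; simp; norm_num
    have hDt : (!![(436:ℝ),-27,-13;257,57,0;-389,-150,-6])ᴴ
        = !![(436:ℝ),257,-389;-27,57,-150;-13,0,-6] := by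
      ext i j
      fin_cases i <;> fin_cases j <;> simp [Matrix.conjTranspose_apply, Matrix.vecHead, Matrix.vecTail]
    have he : (!![(436:ℝ),-27,-13;257,57,0;-389,-150,-6])ᴴ
        * !![(436:ℝ),-27,-13;257,57,0;-389,-150,-6]
        = !![(407466:ℝ),61227,-3334;61227,26478,1251;-3334,1251,205] := by
      rw [hDt]; norm_num [Matrix.mul_fin_three]
    exact he ▸ aux_posDef hD
  · set A : Matrix (Fin 3) (Fin 3) ℝ := !![(196:ℝ),0,0;0,105625,0;0,0,4410000] with hAdef
    set B : Matrix (Fin 3) (Fin 3) ℝ :=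
      !![(407466:ℝ),61227,-3334;61227,26478,1251;-3334,1251,205] with hBdef
    have h1 : A * B = !![(79863336:ℝ), 12000492, -653464;
        6467101875, 2796738750, 132136875; -14702940000, 5516910000, 904050000] := by
      rw [hAdef, hBdef]; norm_num [Matrix.mul_fin_three]
    have h2 : A ^ 2 = !![(38416:ℝ), 0, 0; 0, 11156640625, 0; 0, 0, 19448100000000] := by
      rw [pow_two, hAdef]; norm_num [Matrix.mul_fin_three]
    have h3 : B ^ 2 = !![(169788402241:ℝ), 26564918454, -1282580137;
        26564918454, 4451395014, -170750385; -1282580137, -170750385, 12722582] := by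
      rw [pow_two, hBdef]; norm_num [Matrix.mul_fin_three]
    have h4 : A * B * A ^ 2 = !![(3068029915776:ℝ), 133885176567187500, -12708633218400000000;
        248440185630000, 31202209155761718750, 2569811158687500000000;
        -564828143040000, 61550182230468750000, 17582054805000000000000] := by
      rw [h1, h2]; norm_num [Matrix.mul_fin_three]
    have htr : (A * B * A ^ 2 * B ^ 2).trace = -66859135310438626285968158484 := by
      rw [h4, h3]
      simp [Matrix.mul_fin_three, Matrix.trace_fin_three]
      norm_num
    by_contra hcon
    push_neg at hcon
    set Mc := (A * B * A ^ 2 * B ^ 2).map (algebraMap ℝ ℂ) with hMc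
    have hroots : ∀ z ∈ Mc.charpoly.roots, 0 ≤ z.re := fun z hz =>
      (hcon z (aux_root_mem_spectrum _ (isRoot_of_mem_roots hz))).2.le
    have hsum : 0 ≤ (Mc.charpoly.roots.sum).re := by
      rw [show (Mc.charpoly.roots.sum).re
          = (Mc.charpoly.roots.map Complex.reAddGroupHom).sum from
          map_multiset_sum Complex.reAddGroupHom _]
      refine Multiset.sum_nonneg fun x hx => ?_
      obtain ⟨z, hz, rfl⟩ := Multiset.mem_map.mp hx
      exact hroots z hz
    rw [← Matrix.trace_eq_sum_roots_charpoly] at hsum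
    have htrc : Mc.trace = algebraMap ℝ ℂ ((A * B * A ^ 2 * B ^ 2).trace) := by
      simp [hMc, Matrix.trace, Matrix.map_apply, map_sum, Matrix.diag]
    rw [htrc, htr] at hsum
    norm_num at hsum
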